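/- For every bridgeless cubic graph G: scc(G) > (4/3)·|E(G)| if and only if G is frumious (i.e. for every perfect matching M of G and every positive integer t, the multigraph G + tM is Class II); otherwise scc(G) = (4/3)·|E(G)|. -/

import Mathlib

open Finset
open scoped Classical

/-- A perfect matching of `G`, given as a finite set of edges: every vertex lies on
exactly one edge of `M`. -/
def IsPM {V : Type*} (G : SimpleGraph V) (M : Finset (Sym2 V)) : Prop :=
  (∀ e ∈ M, e ∈ G.edgeSet) ∧ ∀ v : V, (M.filter (fun e => v ∈ e)).card = 1

/-- The multigraph obtained from the cubic graph `G` by adding `m e` parallel copies of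
each edge `e` is Class I with `c` colours; equivalently (since that multigraph is regular)
its edge multiset decomposes into `c` perfect matchings of `G`. -/
def ClassIPlus {V : Type*} (G : SimpleGraph V) (m : Sym2 V → ℕ) (c : ℕ) : Prop :=
  ∃ F : Fin c → Finset (Sym2 V), (∀ i, IsPM G (F i)) ∧
    ∀ e ∈ G.edgeSet, (Finset.univ.filter (fun i => e ∈ F i)).card = 1 + m e

/-- The set of `k` for which some `k` perfect matchings added to `G` give a Class I
multigraph. -/
def lSet {V : Type*} (G : SimpleGraph V) : Set ℕ :=
  {k | ∃ M : Fin k → Finset (Sym2 V), (∀ i, IsPM G (M i)) ∧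
    ClassIPlus G (fun e => (Finset.univ.filter (fun i => e ∈ M i)).card) (k + 3)}

/-- `l(G)`: the minimum number of perfect matchings to add to `G` to get a Class I
multigraph (`⊤` if impossible). -/
noncomputable def lVal {V : Type*} (G : SimpleGraph V) : ℕ∞ :=
  sInf ((fun k : ℕ => (k : ℕ∞)) '' lSet G)

/-- The perfect matching index (excessive index) of `G`. -/
noncomputable def pmIndex {V : Type*} (G : SimpleGraph V) : ℕ∞ :=
  sInf ((fun k : ℕ => (k : ℕ∞)) '' {k | ∃ F : Fin k → Finset (Sym2 V),
    (∀ i, IsPM G (F i)) ∧ ∀ e ∈ G.edgeSet, ∃ i, e ∈ F i})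

/-- `G` is cubic (3-regular). -/
def IsCubic {V : Type*} [Fintype V] (G : SimpleGraph V) : Prop := ∀ v, G.degree v = 3

/-- `G` is bridgeless. -/
def IsBridgeless {V : Type*} (G : SimpleGraph V) : Prop := ∀ e ∈ G.edgeSet, ¬ G.IsBridge e

/-- An even subgraph (a "cycle") of `G`, given by its edge set: every vertex has even
degree. -/
def IsEvenSub {V : Type*} (G : SimpleGraph V) (D : Finset (Sym2 V)) : Prop :=
  (∀ e ∈ D, e ∈ G.edgeSet) ∧ ∀ v : V, Even ((D.filter (fun e => v ∈ e)).card)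

/-- A cycle cover of `G`: a family of cycles (even subgraphs) covering every edge. -/
def IsCycleCover {V : Type*} (G : SimpleGraph V) (k : ℕ)
    (D : Fin k → Finset (Sym2 V)) : Prop :=
  (∀ i, IsEvenSub G (D i)) ∧ ∀ e ∈ G.edgeSet, ∃ i, e ∈ D i

/-- `scc G`: the minimum total length of a cycle cover of `G`. -/
noncomputable def scc {V : Type*} (G : SimpleGraph V) : ℕ :=
  sInf {L | ∃ (k : ℕ) (D : Fin k → Finset (Sym2 V)),
    IsCycleCover G k D ∧ L = ∑ i, (D i).card}

/-- `G` is frumious: for every perfect matching `M` of `G` and every positive integer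
`t`, the multigraph `G + tM` is Class II, i.e. not `(t+3)`-edge-colourable. -/
def Frumious {V : Type*} (G : SimpleGraph V) : Prop :=
  ∀ M : Finset (Sym2 V), IsPM G M → ∀ t : ℕ, 0 < t →
    ¬ ClassIPlus G (fun e => if e ∈ M then t else 0) (t + 3)


section AuxLemmas

variable {V : Type*} [Fintype V] {G : SimpleGraph V}

lemma three_sum {α : Type*} {s : Finset α} {f : α → ℕ} (hcard : s.card = 3)
    (h1 : ∀ e ∈ s, 1 ≤ f e) (h4 : ∑ e ∈ s, f e = 4) :
    (∀ e ∈ s, f e ≤ 2) ∧ (s.filter (fun e => f e = 2)).card = 1 := by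
  classical
  obtain ⟨a, b, c, hab, hac, hbc, rfl⟩ := Finset.card_eq_three.mp hcard
  have hsum : f a + f b + f c = 4 := by
    rw [Finset.sum_insert (by simp [hab, hac]), Finset.sum_insert (by simp [hbc]),
      Finset.sum_singleton] at h4
    omega
  have ha := h1 a (by simp)
  have hb := h1 b (by simp)
  have hc := h1 c (by simp)
  constructor
  · intro e he
    simp only [Finset.mem_insert, Finset.mem_singleton] at he
    rcases he with rfl | rfl | rfl <;> omega
  · rw [Finset.card_filter, Finset.sum_insert (by simp [hab, hac]),
      Finset.sum_insert (by simp [hbc]), Finset.sum_singleton]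
    by_cases h2a : f a = 2 <;> by_cases h2b : f b = 2 <;> by_cases h2c : f c = 2 <;>
      simp [h2a, h2b, h2c] <;> omega

lemma card_filter_mem_sym2 {e : Sym2 V} (he : e ∈ G.edgeSet) :
    (univ.filter (fun v => v ∈ e)).card = 2 := by
  induction e with
  | _ a b =>
    have hab : a ≠ b := (G.mem_edgeSet.mp he).ne
    have : (univ.filter (fun v => v ∈ s(a, b))) = {a, b} := by
      ext v; simp [Sym2.mem_iff]
    rw [this, card_insert_of_notMem (by simp [hab]), card_singleton]

lemma sum_inc_card (D : Finset (Sym2 V)) (hD : ∀ e ∈ D, e ∈ G.edgeSet) :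
    ∑ v, (D.filter (fun e => v ∈ e)).card = 2 * D.card := by
  have h1 : ∀ v : V, (D.filter (fun e => v ∈ e)).card = ∑ e ∈ D, if v ∈ e then 1 else 0 := by
    intro v; rw [card_filter]
  simp only [h1]
  rw [Finset.sum_comm]
  have h2 : ∀ e ∈ D, (∑ v : V, if v ∈ e then 1 else 0) = 2 := by
    intro e he
    have := card_filter_mem_sym2 (G := G) (hD e he)
    rw [card_filter] at this
    exact this
  rw [Finset.sum_congr rfl h2, Finset.sum_const, smul_eq_mul, Nat.mul_comm]

lemma card_inc_eq_degree (v : V) :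
    (G.edgeFinset.filter (fun e => v ∈ e)).card = G.degree v := by
  classical
  rw [← SimpleGraph.card_incidenceFinset_eq_degree]
  congr 1
  rw [SimpleGraph.incidenceFinset_eq_filter]

lemma IsPM.two_card {M : Finset (Sym2 V)} (h : IsPM G M) :
    Fintype.card V = 2 * M.card := by
  have := sum_inc_card (G := G) M h.1
  rw [Finset.sum_congr rfl (fun v _ => h.2 v)] at this
  simpa using this

lemma cubic_count (hcub : IsCubic G) :
    2 * G.edgeFinset.card = 3 * Fintype.card V := by
  have := G.sum_degrees_eq_twice_card_edges
  rw [Finset.sum_congr rfl (fun v _ => hcub v)] at this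
  simp only [Finset.sum_const, smul_eq_mul, Nat.mul_comm] at this
  rw [← Finset.card_univ]
  omega

lemma IsPM.card_edge {M : Finset (Sym2 V)} (h : IsPM G M) (hcub : IsCubic G) :
    G.edgeFinset.card = 3 * M.card := by
  have h1 := h.two_card
  have h2 := cubic_count (G := G) hcub
  omega

lemma IsPM.subset_edgeFinset {M : Finset (Sym2 V)} (h : IsPM G M) :
    M ⊆ G.edgeFinset := fun e he => SimpleGraph.mem_edgeFinset.mpr (h.1 e he)

lemma filter_inc_eq {A : Finset (Sym2 V)} (hA : ∀ e ∈ A, e ∈ G.edgeSet) (v : V) :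
    (G.edgeFinset.filter (fun e => v ∈ e)).filter (fun e => e ∈ A)
      = A.filter (fun e => v ∈ e) := by
  ext e
  simp only [Finset.mem_filter, SimpleGraph.mem_edgeFinset]
  exact ⟨fun h => ⟨h.2, h.1.2⟩, fun h => ⟨⟨hA e h.1, h.2⟩, h.1⟩⟩

lemma cover_of_classI {M : Finset (Sym2 V)} (hM : IsPM G M) {t : ℕ} (ht : 0 < t)
    (hcub : IsCubic G)
    (h : ClassIPlus G (fun e => if e ∈ M then t else 0) (t + 3)) :
    ∃ (k : ℕ) (D : Fin k → Finset (Sym2 V)), IsCycleCover G k D ∧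
      3 * ∑ i, (D i).card = 4 * G.edgeFinset.card := by
  obtain ⟨F, hF, hcount⟩ := h
  set D : Fin (t + 3) → Finset (Sym2 V) :=
    fun i => G.edgeFinset.filter (fun e => Xor' (e ∈ F i) (e ∈ M)) with hD
  have hsub : ∀ i, ∀ e ∈ D i, e ∈ G.edgeSet := by
    intro i e he
    exact SimpleGraph.mem_edgeFinset.mp (Finset.mem_filter.mp he).1
  -- evenness
  have heven : ∀ i, IsEvenSub G (D i) := by
    intro i
    refine ⟨hsub i, fun v => ?_⟩
    set Ev := G.edgeFinset.filter (fun e => v ∈ e) with hEv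
    have hcomm : (D i).filter (fun e => v ∈ e)
        = Ev.filter (fun e => Xor' (e ∈ F i) (e ∈ M)) := by
      rw [hD, hEv, Finset.filter_comm]
    obtain ⟨f, hf⟩ : ∃ f, Ev.filter (fun e => e ∈ F i) = {f} :=
      Finset.card_eq_one.mp (by rw [hEv, filter_inc_eq (hF i).1 v]; exact (hF i).2 v)
    obtain ⟨g, hg⟩ : ∃ g, Ev.filter (fun e => e ∈ M) = {g} :=
      Finset.card_eq_one.mp (by rw [hEv, filter_inc_eq hM.1 v]; exact hM.2 v)
    have hfiff : ∀ e ∈ Ev, (e ∈ F i ↔ e = f) := by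
      intro e he
      constructor
      · intro h'
        have : e ∈ Ev.filter (fun e => e ∈ F i) := Finset.mem_filter.mpr ⟨he, h'⟩
        rw [hf] at this; exact Finset.mem_singleton.mp this
      · intro h'
        have hfm : f ∈ Ev.filter (fun e => e ∈ F i) := by
          rw [hf]; exact Finset.mem_singleton_self f
        rw [h']; exact (Finset.mem_filter.mp hfm).2
    have hgiff : ∀ e ∈ Ev, (e ∈ M ↔ e = g) := by
      intro e he
      constructor
      · intro h'
        have : e ∈ Ev.filter (fun e => e ∈ M) := Finset.mem_filter.mpr ⟨he, h'⟩
        rw [hg] at this; exact Finset.mem_singleton.mp this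
      · intro h'
        have hgm : g ∈ Ev.filter (fun e => e ∈ M) := by
          rw [hg]; exact Finset.mem_singleton_self g
        rw [h']; exact (Finset.mem_filter.mp hgm).2
    have hfEv : f ∈ Ev := by
      have h' : f ∈ Ev.filter (fun e => e ∈ F i) := by
        rw [hf]; exact Finset.mem_singleton_self f
      exact (Finset.mem_filter.mp h').1
    have hgEv : g ∈ Ev := by
      have h' : g ∈ Ev.filter (fun e => e ∈ M) := by
        rw [hg]; exact Finset.mem_singleton_self g
      exact (Finset.mem_filter.mp h').1
    rw [hcomm]
    by_cases hfg : f = g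
    · have : Ev.filter (fun e => Xor' (e ∈ F i) (e ∈ M)) = ∅ := by
        apply Finset.filter_false_of_mem
        intro e he
        rw [hfiff e he, hgiff e he, ← hfg]
        rintro (⟨rfl, h2⟩ | ⟨rfl, h2⟩) <;> exact h2 rfl
      rw [this, Finset.card_empty]; exact Even.zero
    · have : Ev.filter (fun e => Xor' (e ∈ F i) (e ∈ M)) = {f, g} := by
        ext e
        simp only [Finset.mem_filter, Finset.mem_insert, Finset.mem_singleton]
        constructor
        · rintro ⟨he, (⟨h1, _⟩ | ⟨h1, _⟩)⟩
          · exact Or.inl ((hfiff e he).mp h1)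
          · exact Or.inr ((hgiff e he).mp h1)
        · rintro (rfl | rfl)
          · exact ⟨hfEv, Or.inl ⟨(hfiff e hfEv).mpr rfl,
              fun hm => hfg ((hgiff e hfEv).mp hm)⟩⟩
          · exact ⟨hgEv, Or.inr ⟨(hgiff e hgEv).mpr rfl,
              fun hm => hfg (((hfiff e hgEv).mp hm) ▸ rfl)⟩⟩
      rw [this, Finset.card_insert_of_notMem (by simp [hfg]), Finset.card_singleton]
      exact ⟨1, rfl⟩
  -- covering
  have hcover : ∀ e ∈ G.edgeSet, ∃ i, e ∈ D i := by
    intro e he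
    by_cases hem : e ∈ M
    · have hc : (Finset.univ.filter (fun i => e ∈ F i)).card = 1 + t := by
        have := hcount e he; simp only [hem, if_true] at this; exact this
      have hsplit := Finset.card_filter_add_card_filter_not
        (s := (Finset.univ : Finset (Fin (t + 3)))) (p := fun i => e ∈ F i)
      rw [Finset.card_univ, Fintype.card_fin] at hsplit
      have hpos : 0 < (Finset.univ.filter (fun i => ¬ e ∈ F i)).card := by omega
      obtain ⟨i, hi⟩ := Finset.card_pos.mp hpos
      refine ⟨i, Finset.mem_filter.mpr ⟨SimpleGraph.mem_edgeFinset.mpr he, ?_⟩⟩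
      exact Or.inr ⟨hem, (Finset.mem_filter.mp hi).2⟩
    · have hc : (Finset.univ.filter (fun i => e ∈ F i)).card = 1 := by
        have := hcount e he
        simp only [hem, if_false] at this
        simpa using this
      obtain ⟨i, hi⟩ := Finset.card_pos.mp (by omega : 0 < (Finset.univ.filter (fun i => e ∈ F i)).card)
      refine ⟨i, Finset.mem_filter.mpr ⟨SimpleGraph.mem_edgeFinset.mpr he, ?_⟩⟩
      exact Or.inl ⟨(Finset.mem_filter.mp hi).2, hem⟩
  -- length
  have hlen : 3 * ∑ i, (D i).card = 4 * G.edgeFinset.card := by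
    have hsum : ∑ i, (D i).card = G.edgeFinset.card + M.card := by
      have h1 : ∀ i : Fin (t + 3), (D i).card
          = ∑ e ∈ G.edgeFinset, if Xor' (e ∈ F i) (e ∈ M) then 1 else 0 := by
        intro i; rw [hD]; exact card_filter _ _
      rw [Finset.sum_congr rfl (fun i _ => h1 i), Finset.sum_comm]
      have h2 : ∀ e ∈ G.edgeFinset,
          (∑ i : Fin (t + 3), if Xor' (e ∈ F i) (e ∈ M) then 1 else 0)
            = if e ∈ M then 2 else 1 := by
        intro e he
        rw [← card_filter]
        have hc := hcount e (SimpleGraph.mem_edgeFinset.mp he)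
        by_cases hem : e ∈ M
        · rw [if_pos hem]
          have hfe : Finset.univ.filter (fun i => Xor' (e ∈ F i) (e ∈ M))
              = Finset.univ.filter (fun i => ¬ e ∈ F i) := by
            apply Finset.filter_congr; intro i _
            simp only [Xor', xor_def]; tauto
          rw [hfe]
          have hsplit := Finset.card_filter_add_card_filter_not
            (s := (Finset.univ : Finset (Fin (t + 3)))) (p := fun i => e ∈ F i)
          rw [Finset.card_univ, Fintype.card_fin] at hsplit
          simp only [hem, if_true] at hc
          omega
        · rw [if_neg hem]
          have hfe : Finset.univ.filter (fun i => Xor' (e ∈ F i) (e ∈ M))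
              = Finset.univ.filter (fun i => e ∈ F i) := by
            apply Finset.filter_congr; intro i _
            simp only [Xor', xor_def]; tauto
          rw [hfe]
          simp only [hem, if_false] at hc
          omega
      rw [Finset.sum_congr rfl h2]
      have h3 : ∀ e ∈ G.edgeFinset,
          (if e ∈ M then 2 else 1) = 1 + (if e ∈ M then 1 else 0) := by
        intro e _; by_cases h' : e ∈ M <;> simp [h']
      rw [Finset.sum_congr rfl h3, Finset.sum_add_distrib, Finset.sum_const,
        ← card_filter]
      have h4 : G.edgeFinset.filter (fun e => e ∈ M) = M := by
        rw [Finset.filter_mem_eq_inter, Finset.inter_eq_right]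
        exact fun e he => SimpleGraph.mem_edgeFinset.mpr (hM.1 e he)
      rw [h4]
      simp [Nat.mul_comm]
    have hme := hM.card_edge hcub
    omega
  exact ⟨t + 3, D, ⟨heven, hcover⟩, hlen⟩

lemma key (hcub : IsCubic G) {k : ℕ} {D : Fin k → Finset (Sym2 V)}
    (hD : IsCycleCover G k D) :
    4 * G.edgeFinset.card ≤ 3 * ∑ i, (D i).card ∧
      (3 * ∑ i, (D i).card = 4 * G.edgeFinset.card →
        ∃ M, IsPM G M ∧ ∃ t, 0 < t ∧
          ClassIPlus G (fun e => if e ∈ M then t else 0) (t + 3)) := by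
  obtain ⟨heven, hcover⟩ := hD
  set cov : Sym2 V → ℕ := fun e => (univ.filter (fun i => e ∈ D i)).card with hcovdef
  have hsubE : ∀ i, ∀ e ∈ D i, e ∈ G.edgeSet := fun i => (heven i).1
  have hsubF : ∀ i, D i ⊆ G.edgeFinset :=
    fun i e he => SimpleGraph.mem_edgeFinset.mpr (hsubE i e he)
  have hcov1 : ∀ e ∈ G.edgeFinset, 1 ≤ cov e := by
    intro e he
    obtain ⟨i, hi⟩ := hcover e (SimpleGraph.mem_edgeFinset.mp he)
    exact Finset.card_pos.mpr ⟨i, Finset.mem_filter.mpr ⟨Finset.mem_univ i, hi⟩⟩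
  -- total length as sum of coverages
  have hLsum : ∑ i, (D i).card = ∑ e ∈ G.edgeFinset, cov e := by
    have h1 : ∀ i, (D i).card = ∑ e ∈ G.edgeFinset, if e ∈ D i then 1 else 0 := by
      intro i
      rw [← Finset.card_filter]
      congr 1
      rw [Finset.filter_mem_eq_inter, Finset.inter_eq_right.mpr (hsubF i)]
    rw [Finset.sum_congr rfl (fun i _ => h1 i), Finset.sum_comm]
    exact Finset.sum_congr rfl (fun e _ => (Finset.card_filter _ _).symm)
  -- per-vertex coverage sum
  set sv : V → ℕ := fun v => ∑ e ∈ G.edgeFinset.filter (fun e => v ∈ e), cov e with hsvdef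
  set dv : Fin k → V → ℕ := fun i v => ((D i).filter (fun e => v ∈ e)).card with hdvdef
  have hsv : ∀ v, sv v = ∑ i, dv i v := by
    intro v
    rw [hsvdef]
    simp only
    have h1 : ∀ e ∈ G.edgeFinset.filter (fun e => v ∈ e),
        cov e = ∑ i, if e ∈ D i then 1 else 0 :=
      fun e _ => Finset.card_filter _ _
    rw [Finset.sum_congr rfl h1, Finset.sum_comm]
    refine Finset.sum_congr rfl (fun i _ => ?_)
    rw [← Finset.card_filter, filter_inc_eq (hsubE i)]
  have hdveven : ∀ i v, Even (dv i v) := fun i v => (heven i).2 v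
  have hdvle : ∀ i v, dv i v ≤ 3 := by
    intro i v
    have h1 : (D i).filter (fun e => v ∈ e) ⊆ G.edgeFinset.filter (fun e => v ∈ e) :=
      Finset.filter_subset_filter _ (hsubF i)
    have := Finset.card_le_card h1
    rw [card_inc_eq_degree v, hcub v] at this
    exact this
  have hEv3 : ∀ v : V, (G.edgeFinset.filter (fun e => v ∈ e)).card = 3 := by
    intro v; rw [card_inc_eq_degree v, hcub v]
  have hsv4 : ∀ v, 4 ≤ sv v := by
    intro v
    have h3 : 3 ≤ sv v := by
      rw [hsvdef]
      simp only
      calc (3 : ℕ) = ∑ _e ∈ G.edgeFinset.filter (fun e => v ∈ e), 1 := by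
            rw [Finset.sum_const, hEv3 v]; simp
        _ ≤ _ := Finset.sum_le_sum
            (fun e he => hcov1 e (Finset.mem_filter.mp he).1)
    have hev : Even (sv v) := by
      rw [hsv v]
      exact Finset.sum_induction _ Even (fun a b => Even.add) Even.zero (fun i _ => hdveven i v)
    obtain ⟨r, hr⟩ := hev
    omega
  -- handshake: total vertex sum
  have htot : ∑ v, sv v = 2 * ∑ e ∈ G.edgeFinset, cov e := by
    rw [hsvdef]
    simp only
    have h1 : ∀ v : V, ∑ e ∈ G.edgeFinset.filter (fun e => v ∈ e), cov e
        = ∑ e ∈ G.edgeFinset, if v ∈ e then cov e else 0 :=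
      fun v => Finset.sum_filter _ _
    rw [Finset.sum_congr rfl (fun v _ => h1 v), Finset.sum_comm]
    have h2 : ∀ e ∈ G.edgeFinset, (∑ v : V, if v ∈ e then cov e else 0) = 2 * cov e := by
      intro e he
      rw [← Finset.sum_filter, Finset.sum_const,
        card_filter_mem_sym2 (SimpleGraph.mem_edgeFinset.mp he), smul_eq_mul]
    rw [Finset.sum_congr rfl h2, ← Finset.mul_sum]
  have hnsum : 4 * Fintype.card V ≤ ∑ v, sv v := by
    calc 4 * Fintype.card V = ∑ _v : V, 4 := by rw [Finset.sum_const, card_univ]; ring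
      _ ≤ ∑ v, sv v := Finset.sum_le_sum (fun v _ => hsv4 v)
  have hcc := cubic_count (G := G) hcub
  constructor
  · rw [hLsum]
    omega
  -- equality case
  intro heq
  rw [hLsum] at heq
  have hsveq : ∀ v, sv v = 4 := by
    have hsum4 : ∑ v, sv v = 4 * Fintype.card V := by rw [htot]; omega
    intro v
    by_contra hne
    have h5 : 5 ≤ sv v := by have := hsv4 v; omega
    have h1 : ∑ w ∈ univ.erase v, 4 ≤ ∑ w ∈ univ.erase v, sv w :=
      Finset.sum_le_sum (fun w _ => hsv4 w)
    have h2 := Finset.add_sum_erase univ sv (Finset.mem_univ v)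
    have h3 : (univ.erase v).card = Fintype.card V - 1 := by
      rw [Finset.card_erase_of_mem (Finset.mem_univ v), card_univ]
    have hVpos : 1 ≤ Fintype.card V := Fintype.card_pos_iff.mpr ⟨v⟩
    rw [Finset.sum_const, h3, smul_eq_mul] at h1
    omega
  -- per-vertex structure
  have hvert : ∀ v : V, (∀ e ∈ G.edgeFinset.filter (fun e => v ∈ e), cov e ≤ 2) ∧
      ((G.edgeFinset.filter (fun e => v ∈ e)).filter (fun e => cov e = 2)).card = 1 := by
    intro v
    exact three_sum (hEv3 v)
      (fun e he => hcov1 e (Finset.mem_filter.mp he).1) (hsveq v)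
  set M : Finset (Sym2 V) := G.edgeFinset.filter (fun e => cov e = 2) with hMdef
  have hMsub : ∀ e ∈ M, e ∈ G.edgeSet :=
    fun e he => SimpleGraph.mem_edgeFinset.mp (Finset.mem_filter.mp he).1
  have hMv : ∀ v : V, M.filter (fun e => v ∈ e)
      = (G.edgeFinset.filter (fun e => v ∈ e)).filter (fun e => cov e = 2) := by
    intro v; rw [hMdef, Finset.filter_comm]
  have hMPM : IsPM G M := ⟨hMsub, fun v => by rw [hMv v]; exact (hvert v).2⟩
  have hcovle : ∀ e ∈ G.edgeFinset, cov e ≤ 2 := by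
    intro e he
    induction e with
    | _ a b =>
      exact (hvert a).1 _ (Finset.mem_filter.mpr ⟨he, Sym2.mem_mk_left a b⟩)
  have hmemM : ∀ e ∈ G.edgeFinset, (e ∈ M ↔ cov e = 2) := by
    intro e he
    constructor
    · exact fun h => (Finset.mem_filter.mp h).2
    · exact fun h => Finset.mem_filter.mpr ⟨he, h⟩
  have hdvrfl : ∀ (j : Fin k) (w : V), dv j w = ((D j).filter (fun e => w ∈ e)).card :=
    fun j w => rfl
  have hdv02 : ∀ (i : Fin k) (v : V), dv i v = 0 ∨ dv i v = 2 := by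
    intro i v
    obtain ⟨r, hr⟩ := hdveven i v
    have := hdvle i v
    omega
  -- the symmetric differences D i Δ M are perfect matchings
  have hXorPM : ∀ i : Fin k,
      IsPM G (G.edgeFinset.filter (fun e => Xor' (e ∈ D i) (e ∈ M))) := by
    intro i
    constructor
    · intro e he; exact SimpleGraph.mem_edgeFinset.mp (Finset.mem_filter.mp he).1
    · intro v
      set Ev := G.edgeFinset.filter (fun e => v ∈ e) with hEvdef
      have hT : (G.edgeFinset.filter (fun e => Xor' (e ∈ D i) (e ∈ M))).filter
            (fun e => v ∈ e)
          = Ev.filter (fun e => Xor' (e ∈ D i) (e ∈ M)) := by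
        rw [hEvdef, Finset.filter_comm]
      rw [hT]
      obtain ⟨em, hem⟩ : ∃ em, Ev.filter (fun e => e ∈ M) = {em} := by
        apply Finset.card_eq_one.mp
        rw [hEvdef, filter_inc_eq hMsub v]
        exact hMPM.2 v
      have hemEv : em ∈ Ev ∧ em ∈ M := by
        have h' : em ∈ Ev.filter (fun e => e ∈ M) := by
          rw [hem]; exact Finset.mem_singleton_self em
        exact ⟨(Finset.mem_filter.mp h').1, (Finset.mem_filter.mp h').2⟩
      have hMiff : ∀ e ∈ Ev, (e ∈ M ↔ e = em) := by
        intro e he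
        constructor
        · intro h'
          have h'' : e ∈ Ev.filter (fun e => e ∈ M) := Finset.mem_filter.mpr ⟨he, h'⟩
          rw [hem] at h''; exact Finset.mem_singleton.mp h''
        · intro h'; rw [h']; exact hemEv.2
      have hAv : Ev.filter (fun e => e ∈ D i) = (D i).filter (fun e => v ∈ e) := by
        rw [hEvdef]; exact filter_inc_eq (hsubE i) v
      rcases hdv02 i v with h0 | h2
      · -- D i has no edge at v
        have hempty : Ev.filter (fun e => e ∈ D i) = ∅ := by
          rw [hAv]
          apply Finset.card_eq_zero.mp
          rw [← hdvrfl i v]; exact h0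
        have hcongr : Ev.filter (fun e => Xor' (e ∈ D i) (e ∈ M))
            = Ev.filter (fun e => e ∈ M) := by
          apply Finset.filter_congr
          intro e he
          have hnot : e ∉ D i := by
            intro hmem
            have h'' : e ∈ Ev.filter (fun e => e ∈ D i) := Finset.mem_filter.mpr ⟨he, hmem⟩
            rw [hempty] at h''
            exact absurd h'' (Finset.notMem_empty e)
          constructor
          · rintro (⟨h1, _⟩ | ⟨h1, _⟩)
            · exact absurd h1 hnot
            · exact h1
          · intro h1; exact Or.inr ⟨h1, hnot⟩
        rw [hcongr, hem, Finset.card_singleton]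
      · -- D i has two edges at v; first show the M-edge at v lies in D i
        have hemDi : em ∈ D i := by
          by_contra hnem
          have hcovem : (univ.filter (fun j => em ∈ D j)).card = 2 :=
            (hmemM em (Finset.mem_filter.mp hemEv.1).1).mp hemEv.2
          obtain ⟨j1, j2, hj12, hjs⟩ := Finset.card_eq_two.mp hcovem
          have hj1 : em ∈ D j1 := by
            have h' : j1 ∈ univ.filter (fun j => em ∈ D j) := by rw [hjs]; simp
            exact (Finset.mem_filter.mp h').2
          have hj2 : em ∈ D j2 := by
            have h' : j2 ∈ univ.filter (fun j => em ∈ D j) := by rw [hjs]; simp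
            exact (Finset.mem_filter.mp h').2
          have hvem : v ∈ em := (Finset.mem_filter.mp hemEv.1).2
          have hd1 : dv j1 v = 2 := by
            rcases hdv02 j1 v with h | h
            · exfalso
              have h' : em ∈ (D j1).filter (fun e => v ∈ e) :=
                Finset.mem_filter.mpr ⟨hj1, hvem⟩
              have h'' := Finset.card_pos.mpr ⟨em, h'⟩
              rw [← hdvrfl j1 v] at h''
              omega
            · exact h
          have hd2 : dv j2 v = 2 := by
            rcases hdv02 j2 v with h | h
            · exfalso
              have h' : em ∈ (D j2).filter (fun e => v ∈ e) :=
                Finset.mem_filter.mpr ⟨hj2, hvem⟩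
              have h'' := Finset.card_pos.mpr ⟨em, h'⟩
              rw [← hdvrfl j2 v] at h''
              omega
            · exact h
          have hne1 : i ≠ j1 := fun h => hnem (h ▸ hj1)
          have hne2 : i ≠ j2 := fun h => hnem (h ▸ hj2)
          have hsum3 : ∑ j ∈ ({i, j1, j2} : Finset (Fin k)), dv j v = 6 := by
            rw [Finset.sum_insert (by simp [hne1, hne2]),
              Finset.sum_insert (by simp [hj12]), Finset.sum_singleton, h2, hd1, hd2]
            omega
          have h4 : ∑ j, dv j v = 4 := by rw [← hsv v]; exact hsveq v
          have hle' : (6 : ℕ) ≤ 4 := by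
            rw [← h4, ← hsum3]
            exact Finset.sum_le_sum_of_subset (Finset.subset_univ _)
          omega
        -- now the two edges of D i at v are em and some x ≠ em
        have hAv2 : (Ev.filter (fun e => e ∈ D i)).card = 2 := by
          rw [hAv, ← hdvrfl i v]; exact h2
        obtain ⟨a, b, hab, hpair⟩ := Finset.card_eq_two.mp hAv2
        have hxcase : ∀ x, x ≠ em → Ev.filter (fun e => e ∈ D i) = {em, x} →
            Ev.filter (fun e => Xor' (e ∈ D i) (e ∈ M)) = {x} := by
          intro x hxem hp
          have hDiff : ∀ e ∈ Ev, (e ∈ D i ↔ (e = em ∨ e = x)) := by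
            intro e he
            constructor
            · intro h'
              have h'' : e ∈ Ev.filter (fun e => e ∈ D i) := Finset.mem_filter.mpr ⟨he, h'⟩
              rw [hp] at h''
              simpa using h''
            · intro h'
              have h'' : e ∈ ({em, x} : Finset (Sym2 V)) := by simpa using h'
              rw [← hp] at h''
              exact (Finset.mem_filter.mp h'').2
          have hxEv : x ∈ Ev := by
            have h' : x ∈ Ev.filter (fun e => e ∈ D i) := by rw [hp]; simp
            exact (Finset.mem_filter.mp h').1
          ext e
          simp only [Finset.mem_filter, Finset.mem_singleton]
          constructor
          · rintro ⟨he, (⟨h1, hnm⟩ | ⟨hm, h1⟩)⟩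
            · rcases (hDiff e he).mp h1 with h' | h'
              · exact absurd (by rw [h']; exact hemEv.2) hnm
              · exact h'
            · exfalso
              have h' := (hMiff e he).mp hm
              rw [h'] at h1
              exact h1 ((hDiff em hemEv.1).mpr (Or.inl rfl))
          · rintro rfl
            refine ⟨hxEv, Or.inl ⟨(hDiff e hxEv).mpr (Or.inr rfl), ?_⟩⟩
            intro hm
            exact hxem ((hMiff e hxEv).mp hm)
        have hemAv : em ∈ ({a, b} : Finset (Sym2 V)) := by
          rw [← hpair]
          exact Finset.mem_filter.mpr ⟨hemEv.1, hemDi⟩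
        simp only [Finset.mem_insert, Finset.mem_singleton] at hemAv
        rcases hemAv with h' | h'
        · rw [hxcase b (fun hb => hab ((hb.trans h').symm)) (by rw [hpair, h']),
            Finset.card_singleton]
        · rw [hxcase a (fun ha => hab (ha.trans h')) (by rw [hpair, h', Finset.pair_comm]),
            Finset.card_singleton]
  -- assemble ClassIPlus with t = k + 1
  refine ⟨M, hMPM, k + 1, Nat.succ_pos k, ?_⟩
  set FF : Fin (k + 4) → Finset (Sym2 V) := fun i =>
    if h : (i : ℕ) < k then G.edgeFinset.filter (fun e => Xor' (e ∈ D ⟨i, h⟩) (e ∈ M))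
    else M with hFFdef
  have hcast : ∀ i : Fin k, FF (Fin.castAdd 4 i)
      = G.edgeFinset.filter (fun e => Xor' (e ∈ D i) (e ∈ M)) := by
    intro i
    rw [hFFdef]
    simp only
    rw [dif_pos (show ((Fin.castAdd 4 i : Fin (k + 4)) : ℕ) < k from i.isLt)]
    congr 1
  have hpad : ∀ i : Fin 4, FF (Fin.natAdd k i) = M := by
    intro i
    rw [hFFdef]
    simp only
    rw [dif_neg]
    simp
  refine ⟨FF, ?_, ?_⟩
  · intro i
    by_cases h : (i : ℕ) < k
    · have : FF i = G.edgeFinset.filter (fun e => Xor' (e ∈ D ⟨i, h⟩) (e ∈ M)) := by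
        rw [hFFdef]; simp only; rw [dif_pos h]
      rw [this]; exact hXorPM ⟨i, h⟩
    · have : FF i = M := by rw [hFFdef]; simp only; rw [dif_neg h]
      rw [this]; exact hMPM
  · intro e he
    have he' : e ∈ G.edgeFinset := SimpleGraph.mem_edgeFinset.mpr he
    show (univ.filter (fun i : Fin (k + 4) => e ∈ FF i)).card
      = 1 + (if e ∈ M then k + 1 else 0)
    rw [Finset.card_filter,
      Fin.sum_univ_add (f := fun i : Fin (k + 4) => if e ∈ FF i then 1 else 0)]
    have hpadsum : (∑ i : Fin 4, if e ∈ FF (Fin.natAdd k i) then 1 else 0)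
        = if e ∈ M then 4 else 0 := by
      have h1 : ∀ i : Fin 4, (if e ∈ FF (Fin.natAdd k i) then 1 else 0)
          = if e ∈ M then 1 else 0 := by
        intro i; rw [hpad i]
      rw [Finset.sum_congr rfl (fun i _ => h1 i), Finset.sum_const]
      by_cases hm : e ∈ M <;> simp [hm]
    rw [hpadsum]
    have hmain : (∑ i : Fin k, if e ∈ FF (Fin.castAdd 4 i) then 1 else 0)
        = if e ∈ M then k - 2 else 1 := by
      have h1 : ∀ i : Fin k, (if e ∈ FF (Fin.castAdd 4 i) then 1 else 0)
          = if Xor' (e ∈ D i) (e ∈ M) then 1 else 0 := by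
        intro i
        rw [hcast i]
        by_cases hx : Xor' (e ∈ D i) (e ∈ M)
        · rw [if_pos hx]; exact if_pos (Finset.mem_filter.mpr ⟨he', hx⟩)
        · rw [if_neg hx]; exact if_neg (fun hmem : e ∈ G.edgeFinset.filter (fun e => Xor' (e ∈ D i) (e ∈ M)) =>
            hx (Finset.mem_filter.mp hmem).2)
      rw [Finset.sum_congr rfl (fun i _ => h1 i), ← Finset.card_filter]
      by_cases hm : e ∈ M
      · rw [if_pos hm]
        have hcove : (univ.filter (fun i => e ∈ D i)).card = 2 := (hmemM e he').mp hm
        have hfe : univ.filter (fun i : Fin k => Xor' (e ∈ D i) (e ∈ M))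
            = univ.filter (fun i : Fin k => ¬ e ∈ D i) := by
          apply Finset.filter_congr
          intro i _
          simp only [Xor', xor_def]
          tauto
        have hsplit := Finset.card_filter_add_card_filter_not
          (s := (univ : Finset (Fin k))) (p := fun i => e ∈ D i)
        rw [Finset.card_univ, Fintype.card_fin] at hsplit
        rw [hfe]
        omega
      · rw [if_neg hm]
        have hcove : 1 ≤ cov e := hcov1 e he'
        have hcovle' : cov e ≤ 2 := hcovle e he'
        have hcove1 : (univ.filter (fun i => e ∈ D i)).card = 1 := by
          have : ¬ cov e = 2 := fun h => hm ((hmemM e he').mpr h)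
          have hc1 : cov e = 1 := by omega
          exact hc1
        have hfe : univ.filter (fun i : Fin k => Xor' (e ∈ D i) (e ∈ M))
            = univ.filter (fun i : Fin k => e ∈ D i) := by
          apply Finset.filter_congr
          intro i _
          simp only [Xor', xor_def]
          tauto
        rw [hfe, hcove1]
    rw [hmain]
    by_cases hm : e ∈ M
    · have hcove : (univ.filter (fun i => e ∈ D i)).card = 2 := (hmemM e he').mp hm
      have hk2 : 2 ≤ k := by
        have := Finset.card_le_card (Finset.subset_univ (univ.filter (fun i => e ∈ D i)))
        rw [Finset.card_univ, Fintype.card_fin] at this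
        omega
      rw [if_pos hm, if_pos hm, if_pos hm]
      omega
    · rw [if_neg hm, if_neg hm, if_neg hm]

lemma cover_exists (hbl : IsBridgeless G) :
    ∃ (k : ℕ) (D : Fin k → Finset (Sym2 V)), IsCycleCover G k D := by
  classical
  have hstep : ∀ e ∈ G.edgeFinset, ∃ D : Finset (Sym2 V), IsEvenSub G D ∧ e ∈ D := by
    intro e he
    have heS : e ∈ G.edgeSet := SimpleGraph.mem_edgeFinset.mp he
    have hnb := hbl e heS
    rw [SimpleGraph.isBridge_iff_mem_and_forall_cycle_notMem heS] at hnb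
    push_neg at hnb
    obtain ⟨u, p, hcyc, hep⟩ := hnb
    have hnd : p.edges.Nodup := hcyc.isCircuit.isTrail.edges_nodup
    refine ⟨p.edges.toFinset, ⟨?_, ?_⟩, List.mem_toFinset.mpr hep⟩
    · intro e' he'
      exact p.edges_subset_edgeSet (List.mem_toFinset.mp he')
    · intro x
      have h0 : (p.edges.toFinset.filter (fun e => x ∈ e))
          = (p.edges.filter (fun e => x ∈ e)).toFinset := by
        ext a
        simp only [Finset.mem_filter, List.mem_toFinset, List.mem_filter,
          decide_eq_true_eq]
      have h1 : (p.edges.toFinset.filter (fun e => x ∈ e)).card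
          = p.edges.countP (fun e => x ∈ e) := by
        rw [h0, List.toFinset_card_of_nodup (List.Nodup.filter _ hnd),
          ← List.countP_eq_length_filter]
      rw [h1]
      exact (hcyc.isCircuit.isTrail.even_countP_edges_iff x).mpr
        (fun h => absurd rfl h)
  choose Df hDf hDe using hstep
  set Df' : Sym2 V → Finset (Sym2 V) :=
    fun e => if he : e ∈ G.edgeFinset then Df e he else ∅ with hDf'def
  refine ⟨G.edgeFinset.card,
    fun i => Df' (G.edgeFinset.equivFin.symm i : Sym2 V), ?_, ?_⟩
  · intro i
    have hmem := (G.edgeFinset.equivFin.symm i).2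
    rw [hDf'def]
    simp only
    rw [dif_pos hmem]
    exact hDf _ hmem
  · intro e he
    have he' : e ∈ G.edgeFinset := SimpleGraph.mem_edgeFinset.mpr he
    refine ⟨G.edgeFinset.equivFin ⟨e, he'⟩, ?_⟩
    show e ∈ Df' ((G.edgeFinset.equivFin.symm (G.edgeFinset.equivFin ⟨e, he'⟩)) : Sym2 V)
    rw [Equiv.symm_apply_apply, hDf'def]
    simp only
    rw [dif_pos he']
    exact hDe e he'

end AuxLemmas

/-- For every bridgeless cubic graph `G`: `scc(G) > (4/3)·|E(G)|` iff `G` is frumious;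
otherwise `scc(G) = (4/3)·|E(G)|`. -/
theorem stmt16 {V : Type*} [Fintype V] (G : SimpleGraph V)
    (hcub : IsCubic G) (hbl : IsBridgeless G) :
    (4 * G.edgeFinset.card < 3 * scc G ↔ Frumious G) ∧
      (¬ Frumious G → 3 * scc G = 4 * G.edgeFinset.card) := by
  classical
  set S : Set ℕ := {L | ∃ (k : ℕ) (D : Fin k → Finset (Sym2 V)),
    IsCycleCover G k D ∧ L = ∑ i, (D i).card} with hSdef
  have hscc : scc G = sInf S := rfl
  have hLB : ∀ L ∈ S, 4 * G.edgeFinset.card ≤ 3 * L := by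
    rintro L ⟨k, D, hD, rfl⟩
    exact (key hcub hD).1
  have hne : S.Nonempty := by
    obtain ⟨k, D, hD⟩ := cover_exists hbl
    exact ⟨∑ i, (D i).card, k, D, hD, rfl⟩
  have hmem : sInf S ∈ S := Nat.sInf_mem hne
  have hsccLB : 4 * G.edgeFinset.card ≤ 3 * scc G := by
    rw [hscc]; exact hLB _ hmem
  have hB : ¬ Frumious G → 3 * scc G = 4 * G.edgeFinset.card := by
    intro hnf
    unfold Frumious at hnf
    push_neg at hnf
    obtain ⟨M, hM, t, ht, hC⟩ := hnf
    obtain ⟨k, D, hD, hlen⟩ := cover_of_classI hM ht hcub hC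
    have hle : scc G ≤ ∑ i, (D i).card := by
      rw [hscc]
      exact Nat.sInf_le ⟨k, D, hD, rfl⟩
    omega
  have hA : Frumious G → 4 * G.edgeFinset.card < 3 * scc G := by
    intro hfr
    rcases lt_or_eq_of_le hsccLB with h | h
    · exact h
    · exfalso
      obtain ⟨k, D, hD, hlen⟩ := hmem
      have heq : 3 * ∑ i, (D i).card = 4 * G.edgeFinset.card := by
        rw [← hlen, ← hscc] at *
        omega
      obtain ⟨M, hMPM, t, ht, hC⟩ := (key hcub hD).2 heq
      exact hfr M hMPM t ht hC
  refine ⟨⟨fun hlt => ?_, hA⟩, hB⟩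
  by_contra hnf
  have := hB hnf
  omega
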